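/- Let u = s₁…s_N be a nonempty word over {a,a⁻¹,d,d⁻¹} with a palindrome-pattern ι. Then the subwords s₂…s_{ι(1)−1} (the segment strictly between index 1 and its mirror) and s_{ι(1)+1}…s_N (the segment strictly after the mirror of 1) each admit a palindrome-pattern. In particular ι preserves the index sets {2,…,ι(1)−1} and {ι(1)+1,…,N}. -/
import Mathlib


/-- The four-letter alphabet `{a, a⁻¹, d, d⁻¹}`. -/
inductive ADLetter : Type
  | a : ADLetter
  | ainv : ADLetter
  | d : ADLetter
  | dinv : ADLetter
deriving DecidableEq

/-- The formal inverse on the alphabet. -/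
def ADLetter.inv : ADLetter → ADLetter
  | .a => .ainv
  | .ainv => .a
  | .d => .dinv
  | .dinv => .d

/-- `ι` is a palindrome-pattern on the word `w`. -/
def IsPalPattern (w : List ADLetter) (ι : Equiv.Perm (Fin w.length)) : Prop :=
  (∀ i, ι i ≠ i) ∧ (∀ i, ι (ι i) = i) ∧
  (∀ i, w.get (ι i) = w.get i ∨ w.get (ι i) = (w.get i).inv) ∧
  (∀ i j, min i (ι i) < j → j < max i (ι i) → min i (ι i) < ι j ∧ ι j < max i (ι i))

/-- `w` admits a palindrome-pattern. -/
def HasPalindromePattern (w : List ADLetter) : Prop :=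
  ∃ ι : Equiv.Perm (Fin w.length), IsPalPattern w ι

lemma fin_val_min {n : ℕ} (a b : Fin n) : (min a b).val = min a.val b.val := by
  rcases le_total a b with h | h
  · rw [min_eq_left h, min_eq_left (Fin.le_def.mp h)]
  · rw [min_eq_right h, min_eq_right (Fin.le_def.mp h)]

lemma fin_val_max {n : ℕ} (a b : Fin n) : (max a b).val = max a.val b.val := by
  rcases le_total a b with h | h
  · rw [max_eq_right h, max_eq_right (Fin.le_def.mp h)]
  · rw [max_eq_left h, max_eq_left (Fin.le_def.mp h)]

/-- A palindrome pattern restricts to any invariant interval of indices. -/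
lemma pattern_of_sub (w : List ADLetter) (ι : Equiv.Perm (Fin w.length))
    (hι : IsPalPattern w ι) (a : ℕ) (L : List ADLetter)
    (hlen : a + L.length ≤ w.length)
    (hget : ∀ k : ℕ, (hk : k < L.length) → L[k] = w[a + k]'(by omega))
    (hmap : ∀ i : Fin w.length, a ≤ i.val → i.val < a + L.length →
      a ≤ (ι i).val ∧ (ι i).val < a + L.length) :
    HasPalindromePattern L := by
  obtain ⟨hfix, hinv, hlet, hnest⟩ := hι
  have hlt : ∀ k : Fin L.length, a + k.val < w.length := fun k => by omega
  have hb : ∀ k : Fin L.length,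
      a ≤ (ι ⟨a + k.val, hlt k⟩).val ∧ (ι ⟨a + k.val, hlt k⟩).val < a + L.length :=
    fun k => hmap _ (Nat.le_add_right a k.val) (by
      have : ((⟨a + k.val, hlt k⟩ : Fin w.length)).val = a + k.val := rfl
      omega)
  set f : Fin L.length → Fin L.length := fun k =>
    ⟨(ι ⟨a + k.val, hlt k⟩).val - a, by have := hb k; omega⟩ with hf
  have hfval : ∀ k : Fin L.length, (f k).val = (ι ⟨a + k.val, hlt k⟩).val - a :=
    fun k => rfl
  have key : ∀ k : Fin L.length,
      (⟨a + (f k).val, hlt (f k)⟩ : Fin w.length) = ι ⟨a + k.val, hlt k⟩ := by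
    intro k
    have h1 := hb k
    have h2 := hfval k
    apply Fin.ext
    show a + (f k).val = _
    omega
  have hinvol : Function.Involutive f := by
    intro k
    have h2 : ι ⟨a + (f k).val, hlt (f k)⟩ = ⟨a + k.val, hlt k⟩ := by
      rw [key k]; exact hinv _
    apply Fin.ext
    have h3 := hfval (f k)
    rw [h2] at h3
    have h4 : ((⟨a + k.val, hlt k⟩ : Fin w.length)).val = a + k.val := rfl
    omega
  refine ⟨hinvol.toPerm f, ?_, ?_, ?_, ?_⟩
  · intro k h
    have hk : f k = k := h
    have h1 := hb k
    have h2 := hfval k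
    have h3 := congrArg Fin.val hk
    have hval : (ι ⟨a + k.val, hlt k⟩).val = a + k.val := by omega
    exact hfix ⟨a + k.val, hlt k⟩ (Fin.ext hval)
  · intro k
    exact hinvol k
  · intro k
    have hLk : L.get k = w.get ⟨a + k.val, hlt k⟩ := by
      simp only [List.get_eq_getElem]
      exact hget k.val k.isLt
    have hLfk : L.get (hinvol.toPerm f k) = w.get (ι ⟨a + k.val, hlt k⟩) := by
      show L.get (f k) = _
      rw [← key k]
      simp only [List.get_eq_getElem]
      exact hget (f k).val (f k).isLt
    rw [hLk, hLfk]
    exact hlet _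
  · intro i j h1 h2
    have hfi : (hinvol.toPerm f) i = f i := rfl
    have hfj : (hinvol.toPerm f) j = f j := rfl
    rw [hfi] at h1 h2 ⊢
    rw [hfj]
    have hvi : a + (f i).val = (ι ⟨a + i.val, hlt i⟩).val := by
      have := congrArg Fin.val (key i)
      have h4 : ((⟨a + (f i).val, hlt (f i)⟩ : Fin w.length)).val = a + (f i).val := rfl
      omega
    have hvj : a + (f j).val = (ι ⟨a + j.val, hlt j⟩).val := by
      have := congrArg Fin.val (key j)
      have h4 : ((⟨a + (f j).val, hlt (f j)⟩ : Fin w.length)).val = a + (f j).val := rfl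
      omega
    have hmin : (min (⟨a + i.val, hlt i⟩ : Fin w.length) (ι ⟨a + i.val, hlt i⟩)).val
        = min (a + i.val) ((ι ⟨a + i.val, hlt i⟩).val) := fin_val_min _ _
    have hmax : (max (⟨a + i.val, hlt i⟩ : Fin w.length) (ι ⟨a + i.val, hlt i⟩)).val
        = max (a + i.val) ((ι ⟨a + i.val, hlt i⟩).val) := fin_val_max _ _
    rw [Fin.lt_def, fin_val_min] at h1
    rw [Fin.lt_def, fin_val_max] at h2
    have hstep := hnest ⟨a + i.val, hlt i⟩ ⟨a + j.val, hlt j⟩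
      (by rw [Fin.lt_def, hmin]; show _ < a + j.val; omega)
      (by rw [Fin.lt_def, hmax]; show a + j.val < _; omega)
    obtain ⟨c1, c2⟩ := hstep
    rw [Fin.lt_def, hmin] at c1
    rw [Fin.lt_def, hmax] at c2
    rw [← key j] at c1 c2
    have h5 : ((⟨a + (f j).val, hlt (f j)⟩ : Fin w.length)).val = a + (f j).val := rfl
    constructor
    · rw [Fin.lt_def, fin_val_min]; omega
    · rw [Fin.lt_def, fin_val_max]; omega

/-- if `w` is nonempty with palindrome-pattern `ι`, then the segment strictly
between the first index and its mirror, and the segment strictly after the mirror, each admit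
a palindrome-pattern; in particular `ι` preserves these two index sets. -/
theorem palindromePattern_split (w : List ADLetter) (hN : 0 < w.length)
    (ι : Equiv.Perm (Fin w.length)) (hι : IsPalPattern w ι) :
    HasPalindromePattern ((w.take (ι ⟨0, hN⟩).val).drop 1) ∧
    HasPalindromePattern (w.drop ((ι ⟨0, hN⟩).val + 1)) ∧
    (∀ j : Fin w.length, 0 < j.val → j.val < (ι ⟨0, hN⟩).val →
      0 < (ι j).val ∧ (ι j).val < (ι ⟨0, hN⟩).val) ∧
    (∀ j : Fin w.length, (ι ⟨0, hN⟩).val < j.val → (ι ⟨0, hN⟩).val < (ι j).val) := by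
  have hι' := hι
  obtain ⟨hfix, hinv, hlet, hnest⟩ := hι
  set z : Fin w.length := ⟨0, hN⟩ with hz
  have hz0 : z.val = 0 := rfl
  have hmlt : (ι z).val < w.length := (ι z).isLt
  have hm0 : 0 < (ι z).val := by
    by_contra h
    push_neg at h
    exact hfix z (Fin.ext (by omega))
  have hminz : (min z (ι z)).val = 0 := by rw [fin_val_min]; omega
  have hmaxz : (max z (ι z)).val = (ι z).val := by rw [fin_val_max]; omega
  -- part 3
  have part3 : ∀ j : Fin w.length, 0 < j.val → j.val < (ι z).val →
      0 < (ι j).val ∧ (ι j).val < (ι z).val := by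
    intro j h1 h2
    have := hnest z j (by rw [Fin.lt_def, hminz]; omega) (by rw [Fin.lt_def, hmaxz]; omega)
    obtain ⟨c1, c2⟩ := this
    rw [Fin.lt_def, hminz] at c1
    rw [Fin.lt_def, hmaxz] at c2
    exact ⟨c1, c2⟩
  -- part 4
  have part4 : ∀ j : Fin w.length, (ι z).val < j.val → (ι z).val < (ι j).val := by
    intro j hj
    by_contra h
    push_neg at h
    have hne : (ι j).val ≠ (ι z).val := by
      intro he
      have h1 : j = z := ι.injective (Fin.ext he)
      rw [h1] at hj
      omega
    have hne0 : (ι j).val ≠ 0 := by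
      intro he
      have h1 : ι j = z := Fin.ext he
      have h2 : j = ι z := by rw [← hinv j, h1]
      rw [h2] at hj
      omega
    have := part3 (ι j) (by omega) (by omega)
    rw [hinv j] at this
    omega
  refine ⟨?_, ?_, part3, part4⟩
  · -- inner segment
    apply pattern_of_sub w ι hι' 1
    case hlen =>
      simp only [List.length_drop, List.length_take]
      omega
    case hget =>
      intro k hk
      simp only [List.length_drop, List.length_take] at hk
      rw [List.getElem_drop, List.getElem_take]
    case hmap =>
      intro i hi1 hi2
      simp only [List.length_drop, List.length_take] at hi2 ⊢
      have := part3 i (by omega) (by omega)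
      omega
  · -- tail segment
    apply pattern_of_sub w ι hι' ((ι z).val + 1)
    case hlen =>
      simp only [List.length_drop]
      omega
    case hget =>
      intro k hk
      simp only [List.length_drop] at hk
      rw [List.getElem_drop]
    case hmap =>
      intro i hi1 hi2
      have h4 := part4 i (by omega)
      have h5 := (ι i).isLt
      simp only [List.length_drop]
      omega
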